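/- Let C ⊆ L⁰ with 0 ∈ C. Then: (1) the bipolar C°° is a conditionally evenly convex set containing C; (2) C is conditionally evenly convex if and only if C = C°°. -/

import Mathlib

open MeasureTheory

variable {Ω : Type*} [MeasurableSpace Ω]

/-- The countable concatenation property (CSet): for every countable measurable partition
`{A n}` of `Ω` and every sequence `{x n} ⊆ C`, the concatenation `∑ n, 1_{A n} • x n`
(i.e. the element `z ∈ L⁰` agreeing a.e. with `x n` on each `A n`) belongs to `C`. -/
def CSet (μ : Measure Ω) (C : Set (Ω →ₘ[μ] ℝ)) : Prop :=
  ∀ A : ℕ → Set Ω, (∀ n, MeasurableSet (A n)) → Pairwise (Function.onFun Disjoint A) →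
    (⋃ n, A n) = Set.univ →
    ∀ x : ℕ → Ω →ₘ[μ] ℝ, (∀ n, x n ∈ C) →
      ∀ z : Ω →ₘ[μ] ℝ, (∀ n, ∀ᵐ ω ∂μ, ω ∈ A n → z ω = x n ω) → z ∈ C

/-- The countable concatenation hull `C^cc` of `C`. -/
def ccHull (μ : Measure Ω) (C : Set (Ω →ₘ[μ] ℝ)) : Set (Ω →ₘ[μ] ℝ) :=
  {z | ∃ (A : ℕ → Set Ω) (x : ℕ → Ω →ₘ[μ] ℝ),
    (∀ n, MeasurableSet (A n)) ∧ Pairwise (Function.onFun Disjoint A) ∧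
    (⋃ n, A n) = Set.univ ∧ (∀ n, x n ∈ C) ∧
    ∀ n, ∀ᵐ ω ∂μ, ω ∈ A n → z ω = x n ω}

/-- `C 1_A = L⁰ 1_A`: every `x ∈ L⁰` agrees a.e. on `A` with some element of `C`. -/
def FullOn (μ : Measure Ω) (C : Set (Ω →ₘ[μ] ℝ)) (A : Set Ω) : Prop :=
  ∀ x : Ω →ₘ[μ] ℝ, ∃ ξ ∈ C, ∀ᵐ ω ∂μ, ω ∈ A → x ω = ξ ω

/-- `A` is (a version of) the maximal set `A_C` of the class
`{A ∈ 𝒢 ∣ C 1_A = L⁰ 1_A}`; its complement `Aᶜ` is then `D_C`. -/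
def IsMaxFull (μ : Measure Ω) (C : Set (Ω →ₘ[μ] ℝ)) (A : Set Ω) : Prop :=
  MeasurableSet A ∧ FullOn μ C A ∧
    ∀ B : Set Ω, MeasurableSet B → FullOn μ C B → μ (B \ A) = 0

/-- `x` is locally separated from `C` on `H`: for every `B ⊆ H` with `μ B > 0`
there is no `ξ ∈ C` with `x = ξ` a.e. on `B`.  With `H = D_C` this is the paper's
notion of `x` being outside `C`. -/
def LocOutside (μ : Measure Ω) (C : Set (Ω →ₘ[μ] ℝ)) (x : Ω →ₘ[μ] ℝ) (H : Set Ω) : Prop :=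
  ∀ B : Set Ω, MeasurableSet B → B ⊆ H → 0 < μ B →
    ¬ ∃ ξ ∈ C, ∀ᵐ ω ∂μ, ω ∈ B → x ω = ξ ω

/-- `H` is (a version of) the largest measurable set `H_{C,x}` on which `x` is locally
separated from `C`. -/
def IsMaxLocOutside (μ : Measure Ω) (C : Set (Ω →ₘ[μ] ℝ)) (x : Ω →ₘ[μ] ℝ) (H : Set Ω) : Prop :=
  MeasurableSet H ∧ LocOutside μ C x H ∧
    ∀ B : Set Ω, MeasurableSet B → LocOutside μ C x B → μ (B \ H) = 0

/-- `C ⊆ L⁰` is conditionally evenly convex: there are a family `L ⊆ L⁰` and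
`Y_{x'} ∈ L⁰` for each `x' ∈ L` with
`C = ⋂_{x' ∈ L} {x ∣ x·x' < Y_{x'} a.e. on D_C}` (where `D_C = Aᶜ` for the maximal
full set `A = A_C`; the case `L = ∅` gives `C = L⁰`). -/
def CondEvenlyConvex (μ : Measure Ω) (C : Set (Ω →ₘ[μ] ℝ)) : Prop :=
  ∃ A : Set Ω, IsMaxFull μ C A ∧
    ∃ (L : Set (Ω →ₘ[μ] ℝ)) (Y : (Ω →ₘ[μ] ℝ) → Ω →ₘ[μ] ℝ),
      C = ⋂ x' ∈ L, {x : Ω →ₘ[μ] ℝ | ∀ᵐ ω ∂μ, ω ∈ Aᶜ → x ω * x' ω < Y x' ω}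

/-- The polar `C°` of `C` (relative to `D = D_C`). -/
def polarSet (μ : Measure Ω) (C : Set (Ω →ₘ[μ] ℝ)) (D : Set Ω) : Set (Ω →ₘ[μ] ℝ) :=
  {x' | ∀ x ∈ C, ∀ᵐ ω ∂μ, ω ∈ D → x ω * x' ω < 1}

/-- The bipolar `C°°` of `C` (relative to `D = D_C`). -/
def bipolarSet (μ : Measure Ω) (C : Set (Ω →ₘ[μ] ℝ)) (D : Set Ω) : Set (Ω →ₘ[μ] ℝ) :=
  {x | ∀ x' ∈ polarSet μ C D, ∀ᵐ ω ∂μ, ω ∈ D → x ω * x' ω < 1}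

section Aux

open scoped ENNReal NNReal

variable {μ : Measure Ω}

private lemma ae_imp_trans {S T : Set Ω} {p : Ω → Prop}
    (h : ∀ᵐ ω ∂μ, ω ∈ S → p ω) (hTS : μ (T \ S) = 0) :
    ∀ᵐ ω ∂μ, ω ∈ T → p ω := by
  have h2 : ∀ᵐ ω ∂μ, ω ∉ T \ S := measure_eq_zero_iff_ae_notMem.mp hTS
  filter_upwards [h, h2] with ω h1 h2 hT
  by_cases hS : ω ∈ S
  · exact h1 hS
  · exact absurd ⟨hT, hS⟩ h2

private lemma subset_bipolar {C : Set (Ω →ₘ[μ] ℝ)} {D : Set Ω} :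
    C ⊆ bipolarSet μ C D := fun x hx x' hx' => hx' x hx

private lemma fullOn_mono {C C' : Set (Ω →ₘ[μ] ℝ)} {B : Set Ω} (h : C ⊆ C')
    (hf : FullOn μ C B) : FullOn μ C' B := fun x =>
  let ⟨ξ, hξ, he⟩ := hf x; ⟨ξ, h hξ, he⟩

private lemma bip_fullOn_iUnion {C : Set (Ω →ₘ[μ] ℝ)} {A : Set Ω}
    (B : ℕ → Set Ω) (hBm : ∀ n, MeasurableSet (B n))
    (hBf : ∀ n, FullOn μ (bipolarSet μ C Aᶜ) (B n)) :
    FullOn μ (bipolarSet μ C Aᶜ) (⋃ n, B n) := by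
  intro x
  choose ξ hξbip hξeq using fun n => hBf n x
  set D : ℕ → Set Ω := fun n => disjointed B n with hD
  have hd : Pairwise (Function.onFun Disjoint D) := disjoint_disjointed B
  set f : ℕ → Ω → ℝ := fun n ω => (D n).indicator (⇑(ξ n)) ω with hf
  have hvanish : ∀ (n : ℕ) (ω : Ω), ω ∈ D n → ∀ m, m ≠ n → f m ω = 0 := by
    intro n ω hn m hm
    exact Set.indicator_of_notMem (fun hmem => Set.disjoint_left.mp (hd hm) hmem hn) _
  have hsum : ∀ ω, Summable fun n => f n ω := by
    intro ω
    by_cases h : ∃ n, ω ∈ D n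
    · obtain ⟨n, hn⟩ := h
      exact (hasSum_single (f := fun n => f n ω) n (hvanish n ω hn)).summable
    · push_neg at h
      have h0 : (fun n => f n ω) = fun _ => 0 :=
        funext fun n => Set.indicator_of_notMem (h n) _
      rw [h0]; exact summable_zero
  set z₀ : Ω → ℝ := fun ω => ∑' n, f n ω with hz₀
  have hzD : ∀ n ω, ω ∈ D n → z₀ ω = ξ n ω := by
    intro n ω hn
    have h1 : z₀ ω = f n ω := tsum_eq_single n (hvanish n ω hn)
    rw [h1]
    exact Set.indicator_of_mem hn _
  have hz0 : ∀ ω, (∀ n, ω ∉ D n) → z₀ ω = 0 := by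
    intro ω h
    have h0 : (fun n => f n ω) = fun _ => (0 : ℝ) :=
      funext fun n => Set.indicator_of_notMem (h n) _
    have : z₀ ω = ∑' n, f n ω := rfl
    rw [this, h0, tsum_zero]
  have hmz : AEMeasurable z₀ μ := by
    refine aemeasurable_of_tendsto_metrizable_ae Filter.atTop
      (f := fun N ω => ∑ n ∈ Finset.range N, f n ω) (fun N => ?_) ?_
    · exact Finset.aemeasurable_fun_sum _ fun n _ =>
        ((ξ n).aestronglyMeasurable.aemeasurable).indicator (MeasurableSet.disjointed hBm n)
    · exact Filter.Eventually.of_forall fun ω => (hsum ω).hasSum.tendsto_sum_nat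
  set z : Ω →ₘ[μ] ℝ := AEEqFun.mk z₀ hmz.aestronglyMeasurable with hz
  have hzc : ⇑z =ᵐ[μ] z₀ := AEEqFun.coeFn_mk _ _
  refine ⟨z, ?_, ?_⟩
  · intro x' hx'
    have hall : ∀ᵐ ω ∂μ, ∀ n, ω ∈ Aᶜ → ξ n ω * x' ω < 1 :=
      ae_all_iff.mpr fun n => hξbip n x' hx'
    filter_upwards [hzc, hall] with ω h1 h2 hc
    by_cases h : ∃ n, ω ∈ D n
    · obtain ⟨n, hn⟩ := h
      rw [h1, hzD n ω hn]
      exact h2 n hc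
    · push_neg at h
      rw [h1, hz0 ω h, zero_mul]
      exact one_pos
  · have hall : ∀ᵐ ω ∂μ, ∀ n, ω ∈ B n → x ω = ξ n ω := ae_all_iff.mpr hξeq
    filter_upwards [hzc, hall] with ω h1 h2 hU
    have hU' : ω ∈ ⋃ n, D n := by
      rw [show (⋃ n, D n) = ⋃ n, B n from iUnion_disjointed]
      exact hU
    obtain ⟨n, hn⟩ := Set.mem_iUnion.mp hU'
    rw [h1, hzD n ω hn]
    exact h2 n (disjointed_subset B n hn)

end Aux

section Aux2

open scoped ENNReal NNReal

variable {μ : Measure Ω}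

private lemma exists_isMaxFull_bip (μ : Measure Ω) [IsProbabilityMeasure μ]
    (C : Set (Ω →ₘ[μ] ℝ)) (A : Set Ω) (hA : IsMaxFull μ C A) :
    ∃ A', IsMaxFull μ (bipolarSet μ C Aᶜ) A' := by
  classical
  set bip := bipolarSet μ C Aᶜ with hbipdef
  have hAf : FullOn μ bip A := fullOn_mono subset_bipolar hA.2.1
  set s : ℝ≥0∞ := ⨆ (B : Set Ω) (_ : MeasurableSet B) (_ : FullOn μ bip B), μ B with hs
  have hsfin : s ≠ ∞ := by
    have : s ≤ 1 := by
      refine iSup_le fun B => iSup_le fun _ => iSup_le fun _ => prob_le_one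
    exact (this.trans_lt (by norm_num)).ne
  have hex : ∀ n : ℕ, ∃ B, MeasurableSet B ∧ FullOn μ bip B ∧
      s ≤ μ B + ((n : ℝ≥0∞) + 1)⁻¹ := by
    intro n
    have hε0 : ((n : ℝ≥0∞) + 1)⁻¹ ≠ 0 :=
      ENNReal.inv_ne_zero.mpr (by simp [ENNReal.add_eq_top, ENNReal.natCast_ne_top])
    by_cases hs0 : s = 0
    · exact ⟨A, hA.1, hAf, by simp [hs0]⟩
    · have hlt : s - ((n : ℝ≥0∞) + 1)⁻¹ < s := ENNReal.sub_lt_self hsfin hs0 hε0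
      rw [hs] at hlt
      simp only [lt_iSup_iff] at hlt
      obtain ⟨B, hm, hf, hlt⟩ := hlt
      exact ⟨B, hm, hf, tsub_le_iff_right.mp hlt.le⟩
  choose B hBm hBf hBs using hex
  refine ⟨⋃ n, B n, MeasurableSet.iUnion hBm, bip_fullOn_iUnion B hBm hBf, ?_⟩
  set A' : Set Ω := ⋃ n, B n with hA'
  have hA'm : MeasurableSet A' := MeasurableSet.iUnion hBm
  have hA'f : FullOn μ bip A' := bip_fullOn_iUnion B hBm hBf
  have hsle : s ≤ μ A' := by
    refine ENNReal.le_of_forall_pos_le_add fun ε hε hfin => ?_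
    obtain ⟨n, hn⟩ := ENNReal.exists_inv_nat_lt
      (show (ε : ℝ≥0∞) ≠ 0 by exact_mod_cast hε.ne')
    calc s ≤ μ (B n) + ((n : ℝ≥0∞) + 1)⁻¹ := hBs n
      _ ≤ μ A' + ((n : ℝ≥0∞))⁻¹ :=
        add_le_add (measure_mono (Set.subset_iUnion B n)) (ENNReal.inv_le_inv' le_self_add)
      _ ≤ μ A' + ε := add_le_add le_rfl hn.le
  intro T hTm hTf
  have hUm : MeasurableSet (T ∪ A') := hTm.union hA'm
  have hUf : FullOn μ bip (T ∪ A') := by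
    have h2 : (⋃ k, (fun k : ℕ => if k = 0 then T else A') k) = T ∪ A' := by
      apply Set.Subset.antisymm
      · refine Set.iUnion_subset fun k => ?_
        by_cases hk : k = 0
        · simp only [hk, if_true]; exact Set.subset_union_left
        · simp only [hk, if_false]; exact Set.subset_union_right
      · refine Set.union_subset ?_ ?_
        · simpa using Set.subset_iUnion (fun k : ℕ => if k = 0 then T else A') 0
        · simpa using Set.subset_iUnion (fun k : ℕ => if k = 0 then T else A') 1
    rw [← h2]
    refine bip_fullOn_iUnion _ (fun k => ?_) (fun k => ?_)
    · by_cases hk : k = 0 <;> simp [hk, hTm, hA'm]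
    · by_cases hk : k = 0 <;> simp [hk] <;> assumption
  have h1 : μ (T ∪ A') ≤ s := by
    have e : (⨆ (_ : MeasurableSet (T ∪ A')) (_ : FullOn μ bip (T ∪ A')), μ (T ∪ A'))
        = μ (T ∪ A') := by rw [iSup_pos hUm, iSup_pos hUf]
    rw [hs, ← e]
    exact le_iSup (fun B => ⨆ (_ : MeasurableSet B) (_ : FullOn μ bip B), μ B) (T ∪ A')
  have h2 : μ (T \ A') + μ A' ≤ 0 + μ A' := by
    have he : μ (T \ A') + μ A' = μ (T ∪ A') := by
      rw [← measure_union Set.disjoint_sdiff_left hA'm, Set.diff_union_self]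
    rw [he, zero_add]
    exact h1.trans hsle
  have := (ENNReal.add_le_add_iff_right (measure_ne_top μ A')).mp h2
  exact le_antisymm this zero_le

private lemma bip_repr [IsProbabilityMeasure μ]
    (C : Set (Ω →ₘ[μ] ℝ)) (A A' : Set Ω) (hA : IsMaxFull μ C A)
    (hA' : IsMaxFull μ (bipolarSet μ C Aᶜ) A') :
    bipolarSet μ C Aᶜ = ⋂ x' ∈ polarSet μ C Aᶜ,
      {x : Ω →ₘ[μ] ℝ | ∀ᵐ ω ∂μ, ω ∈ A'ᶜ → x ω * x' ω < (1 : Ω →ₘ[μ] ℝ) ω} := by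
  have hAA' : μ (A \ A') = 0 := hA'.2.2 A hA.1 (fullOn_mono subset_bipolar hA.2.1)
  have hT : A'ᶜ \ Aᶜ = A \ A' := by
    ext ω; simp only [Set.mem_diff, Set.mem_compl_iff, not_not]; tauto
  ext x
  constructor
  · intro hx
    refine Set.mem_iInter₂.mpr fun x' hx' => ?_
    have h1 : ∀ᵐ ω ∂μ, ω ∈ A'ᶜ → x ω * x' ω < 1 :=
      ae_imp_trans (hx x' hx') (by rw [hT]; exact hAA')
    filter_upwards [h1, (AEEqFun.coeFn_one : ⇑(1 : Ω →ₘ[μ] ℝ) =ᵐ[μ] 1)] with ω h1 hone hc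
    have e : (1 : Ω →ₘ[μ] ℝ) ω = 1 := hone
    rw [e]
    exact h1 hc
  · intro hx
    obtain ⟨ξ, hξbip, hξeq⟩ := hA'.2.1 x
    intro x' hx'
    have h1 := Set.mem_iInter₂.mp hx x' hx'
    have h2 := hξbip x' hx'
    filter_upwards [h1, h2, hξeq, (AEEqFun.coeFn_one : ⇑(1 : Ω →ₘ[μ] ℝ) =ᵐ[μ] 1)] with ω h1 h2 h3 h4 hAc
    by_cases hmem : ω ∈ A'
    · rw [h3 hmem]
      exact h2 hAc
    · have := h1 hmem
      have e : (1 : Ω →ₘ[μ] ℝ) ω = 1 := h4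
      rwa [e] at this

private lemma evenly_to_bipolar [IsProbabilityMeasure μ]
    (C : Set (Ω →ₘ[μ] ℝ)) (h0 : (0 : Ω →ₘ[μ] ℝ) ∈ C) (A : Set Ω)
    (hA : IsMaxFull μ C A) (h : CondEvenlyConvex μ C) :
    bipolarSet μ C Aᶜ ⊆ C := by
  obtain ⟨A₀, hA₀, L, Y, hrep⟩ := h
  have hAA₀ : μ (A \ A₀) = 0 := hA₀.2.2 A hA.1 hA.2.1
  have hA₀A : μ (A₀ \ A) = 0 := hA.2.2 A₀ hA₀.1 hA₀.2.1
  have hT1 : μ (Aᶜ \ A₀ᶜ) = 0 := by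
    have e : Aᶜ \ A₀ᶜ = A₀ \ A := by
      ext ω; simp only [Set.mem_diff, Set.mem_compl_iff, not_not]; tauto
    rw [e]; exact hA₀A
  have hT2 : μ (A₀ᶜ \ Aᶜ) = 0 := by
    have e : A₀ᶜ \ Aᶜ = A \ A₀ := by
      ext ω; simp only [Set.mem_diff, Set.mem_compl_iff, not_not]; tauto
    rw [e]; exact hAA₀
  intro x hx
  rw [hrep]
  refine Set.mem_iInter₂.mpr fun x' hx' => ?_
  set y := Y x' with hy
  have hy0 : ∀ᵐ ω ∂μ, ω ∈ Aᶜ → 0 < y ω := by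
    have h00 := Set.mem_iInter₂.mp (hrep.subset h0) x' hx'
    have h01 := ae_imp_trans h00 hT1
    filter_upwards [h01, (AEEqFun.coeFn_zero : ⇑(0 : Ω →ₘ[μ] ℝ) =ᵐ[μ] 0)] with ω h1 h2 hc
    have e : (0 : Ω →ₘ[μ] ℝ) ω = 0 := h2
    have := h1 hc
    rwa [e, zero_mul] at this
  have hmf : AEMeasurable (fun ω => x' ω * (y ω)⁻¹) μ :=
    (x'.aestronglyMeasurable.aemeasurable).mul (y.aestronglyMeasurable.aemeasurable).inv
  set x'' : Ω →ₘ[μ] ℝ := AEEqFun.mk _ hmf.aestronglyMeasurable with hx''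
  have hcoe : ⇑x'' =ᵐ[μ] fun ω => x' ω * (y ω)⁻¹ := AEEqFun.coeFn_mk _ _
  have hx''pol : x'' ∈ polarSet μ C Aᶜ := by
    intro ξ hξ
    have hξ' := Set.mem_iInter₂.mp (hrep.subset hξ) x' hx'
    have hξA := ae_imp_trans hξ' hT1
    filter_upwards [hξA, hy0, hcoe] with ω h1 h2 h3 hc
    have e : x'' ω = x' ω * (y ω)⁻¹ := h3
    have hyp := h2 hc
    rw [e, show ξ ω * (x' ω * (y ω)⁻¹) = ξ ω * x' ω / y ω by
      rw [div_eq_mul_inv, mul_assoc], div_lt_one hyp]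
    exact h1 hc
  have hfin := hx x'' hx''pol
  have hlt : ∀ᵐ ω ∂μ, ω ∈ Aᶜ → x ω * x' ω < y ω := by
    filter_upwards [hfin, hy0, hcoe] with ω h1 h2 h3 hc
    have e : x'' ω = x' ω * (y ω)⁻¹ := h3
    have hyp := h2 hc
    have := h1 hc
    rwa [e, show x ω * (x' ω * (y ω)⁻¹) = x ω * x' ω / y ω by
      rw [div_eq_mul_inv, mul_assoc], div_lt_one hyp] at this
  exact ae_imp_trans hlt hT2

end Aux2

/-- **Bipolar theorem, parts 2 and 3.**  Let `C ⊆ L⁰` with `0 ∈ C`, and let `A` be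
the maximal set `A_C` (so `Aᶜ = D_C`).  Then (1) the bipolar `C°°` is a
conditionally evenly convex set containing `C`; (2) `C` is conditionally evenly
convex if and only if `C = C°°`. -/
theorem stmt2 (μ : Measure Ω) [IsProbabilityMeasure μ]
    (C : Set (Ω →ₘ[μ] ℝ)) (h0 : (0 : Ω →ₘ[μ] ℝ) ∈ C)
    (A : Set Ω) (hA : IsMaxFull μ C A) :
    (CondEvenlyConvex μ (bipolarSet μ C Aᶜ) ∧ C ⊆ bipolarSet μ C Aᶜ) ∧
      (CondEvenlyConvex μ C ↔ C = bipolarSet μ C Aᶜ) := by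
  classical
  obtain ⟨A', hA'⟩ := exists_isMaxFull_bip μ C A hA
  have hsub : C ⊆ bipolarSet μ C Aᶜ := subset_bipolar
  have hcc : CondEvenlyConvex μ (bipolarSet μ C Aᶜ) :=
    ⟨A', hA', polarSet μ C Aᶜ, fun _ => (1 : Ω →ₘ[μ] ℝ), bip_repr C A A' hA hA'⟩
  refine ⟨⟨hcc, hsub⟩, ?_, ?_⟩
  · intro h
    exact Set.Subset.antisymm hsub (evenly_to_bipolar C h0 A hA h)
  · intro h
    rw [h]
    exact hcc
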